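/- For every integer n ≥ 2 there exist constants A > 0 and r_* ∈ (0,1) such that for every δ with |δ| ≤ 1/2 and every sufficiently small ε > 0 there exists t_* > 0 with the following property. Set a = (1+δ)(n−1)/4, Λ(r) = 1/(−log r), Γ(r) = F[aΛ](r), and v⁺(r,t) = aΛ(r) + (1+ε)·t·Γ(r). Then ∂_t v⁺(r,t) ≥ F[v⁺(·,t)](r) for all (r,t) with (A/√ε)·√t ≤ r ≤ r_* and 0 < t < t_*. -/

import Mathlib

open Real Set Filter

/-- The quasilinear operator `F[v](r) = v v'' - (1/2)(v')² + ((n-1-v)/r) v' + (2(n-1)/r²) v (1-v)`. -/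
noncomputable def Fop (n : ℕ) (v : ℝ → ℝ) (r : ℝ) : ℝ :=
  v r * deriv (deriv v) r - (1/2) * (deriv v r)^2
    + (((n : ℝ) - 1 - v r) / r) * deriv v r
    + (2 * ((n : ℝ) - 1) / r^2) * v r * (1 - v r)

/-- `Λ(r) = 1/(-log r)`. -/
noncomputable def Lam (r : ℝ) : ℝ := 1 / (-Real.log r)

/-- The outer-region barrier `v(r,t) = a Λ(r) + b t Γ(r)`, where `Γ = F[aΛ]`. -/
noncomputable def vOuter (n : ℕ) (a b : ℝ) (r t : ℝ) : ℝ :=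
  a * Lam r + b * t * Fop n (fun ρ => a * Lam ρ) r

lemma lam_pos {r : ℝ} (h0 : 0 < r) (h1 : r < 1) : 0 < Lam r := by
  have h := Real.log_neg h0 h1
  have : 0 < -Real.log r := by linarith
  unfold Lam; positivity

lemma hasDerivAt_lam {r : ℝ} (h0 : 0 < r) (h1 : r < 1) :
    HasDerivAt Lam ((Lam r)^2 / r) r := by
  have hlog : Real.log r < 0 := Real.log_neg h0 h1
  have h := ((Real.hasDerivAt_log h0.ne').neg).inv (by simpa using hlog.ne)
  have heq : Lam = fun y => (-Real.log y)⁻¹ := by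
    funext y; simp [Lam, one_div]
  rw [heq]
  refine h.congr_deriv ?_
  have hne : Real.log r ≠ 0 := hlog.ne
  simp only [Pi.neg_apply]
  field_simp

/-- explicit formula for `F[aΛ]` -/
noncomputable def gamE (N a r : ℝ) : ℝ :=
  (2*a*N * Lam r + (a*N - 2*a^2*N) * Lam r^2 + (-2*a^2) * Lam r^3 + (3/2*a^2) * Lam r^4) / r^2

noncomputable def gamE' (N a r : ℝ) : ℝ :=
  ((-4*a*N) * Lam r + (4*a^2*N) * Lam r^2 + (2*a*N + 4*a^2 - 4*a^2*N) * Lam r^3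
    + (-9*a^2) * Lam r^4 + (6*a^2) * Lam r^5) / r^3

noncomputable def gamE'' (N a r : ℝ) : ℝ :=
  ((12*a*N) * Lam r + (-4*a*N - 12*a^2*N) * Lam r^2 + (-6*a*N - 12*a^2 + 20*a^2*N) * Lam r^3
    + (6*a*N + 39*a^2 - 12*a^2*N) * Lam r^4 + (-54*a^2) * Lam r^5 + (30*a^2) * Lam r^6) / r^4

lemma hasDerivAt_glam (a : ℝ) {r : ℝ} (h0 : 0 < r) (h1 : r < 1) :
    HasDerivAt (fun ρ => a * Lam ρ) (a * Lam r^2 / r) r := by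
  have h := (hasDerivAt_lam h0 h1).const_mul a
  refine h.congr_deriv ?_; ring

lemma deriv_glam (a : ℝ) {r : ℝ} (h0 : 0 < r) (h1 : r < 1) :
    deriv (fun ρ => a * Lam ρ) r = a * Lam r^2 / r := (hasDerivAt_glam a h0 h1).deriv

lemma deriv2_glam (a : ℝ) {r : ℝ} (h0 : 0 < r) (h1 : r < 1) :
    deriv (deriv (fun ρ => a * Lam ρ)) r = a * (2 * Lam r^3 - Lam r^2) / r^2 := by
  have hev : deriv (fun ρ => a * Lam ρ) =ᶠ[nhds r] fun ρ => a * Lam ρ^2 / ρ := by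
    filter_upwards [Ioo_mem_nhds h0 h1] with ρ hρ
    exact deriv_glam a hρ.1 hρ.2
  rw [hev.deriv_eq]
  have h : HasDerivAt (fun ρ => a * Lam ρ^2 / ρ)
      ((a * (2 * Lam r^(2-1) * ((Lam r)^2/r)) * r - a * Lam r^2 * 1) / r^2) r :=
    (((hasDerivAt_lam h0 h1).pow 2).const_mul a).div (hasDerivAt_id' r) h0.ne'
  rw [h.deriv]
  field_simp
  ring

lemma hasDerivAt_gamE (N a : ℝ) {r : ℝ} (h0 : 0 < r) (h1 : r < 1) :
    HasDerivAt (fun ρ => gamE N a ρ) (gamE' N a r) r := by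
  have hL := hasDerivAt_lam h0 h1
  have hp := (((hL.const_mul (2*a*N)).add ((hL.pow 2).const_mul (a*N - 2*a^2*N))).add
      ((hL.pow 3).const_mul (-2*a^2))).add ((hL.pow 4).const_mul (3/2*a^2))
  have h := hp.div (hasDerivAt_pow 2 r) (pow_ne_zero 2 h0.ne')
  simp only [gamE]
  refine h.congr_deriv ?_
  simp only [gamE']
  have hlog : Real.log r < 0 := Real.log_neg h0 h1
  simp only [Pi.add_apply, Pi.pow_apply]
  field_simp
  ring

lemma hasDerivAt_gamE' (N a : ℝ) {r : ℝ} (h0 : 0 < r) (h1 : r < 1) :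
    HasDerivAt (fun ρ => gamE' N a ρ) (gamE'' N a r) r := by
  have hL := hasDerivAt_lam h0 h1
  have hp := ((((hL.const_mul (-4*a*N)).add ((hL.pow 2).const_mul (4*a^2*N))).add
      ((hL.pow 3).const_mul (2*a*N + 4*a^2 - 4*a^2*N))).add
      ((hL.pow 4).const_mul (-9*a^2))).add ((hL.pow 5).const_mul (6*a^2))
  have h := hp.div (hasDerivAt_pow 3 r) (pow_ne_zero 3 h0.ne')
  simp only [gamE']
  refine h.congr_deriv ?_
  simp only [gamE'']
  simp only [Pi.add_apply, Pi.pow_apply]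
  field_simp
  ring

noncomputable def LEe (N a r : ℝ) : ℝ :=
  ((2*a*N^2 + 16*a^2*N - 8*a^2*N^2) * Lam r^2
    + (2*a*N^2 - 4*a^2*N - 8*a^2*N^2 - 16*a^3*N + 8*a^3*N^2) * Lam r^3
    + (-12*a^2*N - 16*a^3 + 32*a^3*N) * Lam r^4
    + (12*a^2*N + 48*a^3 - 18*a^3*N) * Lam r^5
    + (-58*a^3) * Lam r^6 + (27*a^3) * Lam r^7) / r^4

noncomputable def QEe (N a r : ℝ) : ℝ :=
  ((24*a^2*N^2 - 8*a^2*N^3) * Lam r^2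
    + (8*a^2*N^2 - 8*a^2*N^3 - 48*a^3*N^2 + 16*a^3*N^3) * Lam r^3
    + (-12*a^2*N^2 - 2*a^2*N^3 - 48*a^3*N + 40*a^3*N^2 + 8*a^3*N^3 + 24*a^4*N^2 - 8*a^4*N^3) * Lam r^4
    + (4*a^2*N^2 + 76*a^3*N + 4*a^3*N^2 + 48*a^4*N - 48*a^4*N^2) * Lam r^5
    + (4*a^2*N^2 - 46*a^3*N - 22*a^3*N^2 + 24*a^4 - 124*a^4*N + 28*a^4*N^2) * Lam r^6
    + (-6*a^3*N - 84*a^4 + 132*a^4*N) * Lam r^7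
    + (27*a^3*N + (255/2)*a^4 - (117/2)*a^4*N) * Lam r^8
    + (-96*a^4) * Lam r^9 + (27*a^4) * Lam r^10) / r^6

lemma fop_glam (n : ℕ) (a : ℝ) {r : ℝ} (h0 : 0 < r) (h1 : r < 1) :
    Fop n (fun ρ => a * Lam ρ) r = gamE ((n:ℝ) - 1) a r := by
  simp only [Fop, gamE]
  rw [deriv_glam a h0 h1, deriv2_glam a h0 h1]
  field_simp
  ring

lemma vO_eq (n : ℕ) (a b t : ℝ) {ρ : ℝ} (h0 : 0 < ρ) (h1 : ρ < 1) :
    vOuter n a b ρ t = a * Lam ρ + (b*t) * gamE ((n:ℝ)-1) a ρ := by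
  rw [vOuter, fop_glam n a h0 h1]

lemma vO_deriv (n : ℕ) (a b t : ℝ) {r : ℝ} (h0 : 0 < r) (h1 : r < 1) :
    deriv (fun ρ => vOuter n a b ρ t) r = a * Lam r^2 / r + (b*t) * gamE' ((n:ℝ)-1) a r := by
  have hev : (fun ρ => vOuter n a b ρ t) =ᶠ[nhds r]
      (fun ρ => a * Lam ρ + (b*t) * gamE ((n:ℝ)-1) a ρ) := by
    filter_upwards [Ioo_mem_nhds h0 h1] with ρ hρ
    exact vO_eq n a b t hρ.1 hρ.2
  rw [hev.deriv_eq]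
  exact ((hasDerivAt_glam a h0 h1).add
    ((hasDerivAt_gamE ((n:ℝ)-1) a h0 h1).const_mul (b*t))).deriv

lemma vO_deriv2 (n : ℕ) (a b t : ℝ) {r : ℝ} (h0 : 0 < r) (h1 : r < 1) :
    deriv (deriv (fun ρ => vOuter n a b ρ t)) r
      = a * (2 * Lam r^3 - Lam r^2) / r^2 + (b*t) * gamE'' ((n:ℝ)-1) a r := by
  have hev : deriv (fun ρ => vOuter n a b ρ t) =ᶠ[nhds r]
      (fun ρ => a * Lam ρ^2 / ρ + (b*t) * gamE' ((n:ℝ)-1) a ρ) := by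
    filter_upwards [Ioo_mem_nhds h0 h1] with ρ hρ
    exact vO_deriv n a b t hρ.1 hρ.2
  rw [hev.deriv_eq]
  have hpart : HasDerivAt (fun ρ => a * Lam ρ^2 / ρ)
      ((a * (2 * Lam r^(2-1) * ((Lam r)^2/r)) * r - a * Lam r^2 * 1) / r^2) r :=
    (((hasDerivAt_lam h0 h1).pow 2).const_mul a).div (hasDerivAt_id' r) h0.ne'
  have h : HasDerivAt (fun ρ => a * Lam ρ^2 / ρ + (b*t) * gamE' ((n:ℝ)-1) a ρ) _ r := hpart.add ((hasDerivAt_gamE' ((n:ℝ)-1) a h0 h1).const_mul (b*t))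
  rw [h.deriv]
  congr 1
  field_simp
  ring

set_option maxHeartbeats 1000000 in
lemma fop_vO (n : ℕ) (a b t : ℝ) {r : ℝ} (h0 : 0 < r) (h1 : r < 1) :
    Fop n (fun ρ => vOuter n a b ρ t) r
      = gamE ((n:ℝ)-1) a r + b*t * LEe ((n:ℝ)-1) a r + b^2*t^2 * QEe ((n:ℝ)-1) a r := by
  simp only [Fop]
  rw [vO_deriv n a b t h0 h1, vO_deriv2 n a b t h0 h1, vO_eq n a b t h0 h1]
  simp only [gamE, gamE', gamE'', LEe, QEe]
  field_simp
  ring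
lemma P2bound {N a l : ℝ} (hN : 1 ≤ N) (ha0 : 0 < a) (haN : a ≤ N) (hl0 : 0 < l) (hl1 : l ≤ 1) :
    2*N^2*l^1 + 16*a^1*N^1*l^1 - 8*a^1*N^2*l^1 + 2*N^2*l^2 - 4*a^1*N^1*l^2 - 8*a^1*N^2*l^2 - 16*a^2*N^1*l^2 + 8*a^2*N^2*l^2 - 12*a^1*N^1*l^3 - 16*a^2*l^3 + 32*a^2*N^1*l^3 + 12*a^1*N^1*l^4 + 48*a^2*l^4 - 18*a^2*N^1*l^4 - 58*a^2*l^5 + 27*a^2*l^6 ≤ 300*N^4 := by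
  have hNpos : (0:ℝ) < N := lt_of_lt_of_le one_pos hN
  have hb1 : N^2*l^1 ≤ N^4 := by
    have h1 : a^0 ≤ N^0 := pow_le_pow_left₀ ha0.le haN 0
    have h2 : N^0*N^2 ≤ N^4 := by rw [← pow_add]; exact pow_le_pow_right₀ hN (by norm_num)
    have h3 : l^1 ≤ 1 := pow_le_one₀ hl0.le hl1
    have h4 : a^0*N^2 ≤ N^4 := le_trans (mul_le_mul_of_nonneg_right h1 (pow_pos hNpos 2).le) h2
    have h6 : (0:ℝ) ≤ a^0*N^2 := by positivity
    linarith [h4, mul_le_mul_of_nonneg_left h3 h6]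
  have hb2 : N^2*l^2 ≤ N^4 := by
    have h1 : a^0 ≤ N^0 := pow_le_pow_left₀ ha0.le haN 0
    have h2 : N^0*N^2 ≤ N^4 := by rw [← pow_add]; exact pow_le_pow_right₀ hN (by norm_num)
    have h3 : l^2 ≤ 1 := pow_le_one₀ hl0.le hl1
    have h4 : a^0*N^2 ≤ N^4 := le_trans (mul_le_mul_of_nonneg_right h1 (pow_pos hNpos 2).le) h2
    have h6 : (0:ℝ) ≤ a^0*N^2 := by positivity
    linarith [h4, mul_le_mul_of_nonneg_left h3 h6]
  have hb3 : a^1*N^1*l^1 ≤ N^4 := by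
    have h1 : a^1 ≤ N^1 := pow_le_pow_left₀ ha0.le haN 1
    have h2 : N^1*N^1 ≤ N^4 := by rw [← pow_add]; exact pow_le_pow_right₀ hN (by norm_num)
    have h3 : l^1 ≤ 1 := pow_le_one₀ hl0.le hl1
    have h4 : a^1*N^1 ≤ N^4 := le_trans (mul_le_mul_of_nonneg_right h1 (pow_pos hNpos 1).le) h2
    have h6 : (0:ℝ) ≤ a^1*N^1 := by positivity
    linarith [h4, mul_le_mul_of_nonneg_left h3 h6]
  have hn4 : 0 ≤ a^1*N^1*l^2 := by positivity
  have hn5 : 0 ≤ a^1*N^1*l^3 := by positivity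
  have hb6 : a^1*N^1*l^4 ≤ N^4 := by
    have h1 : a^1 ≤ N^1 := pow_le_pow_left₀ ha0.le haN 1
    have h2 : N^1*N^1 ≤ N^4 := by rw [← pow_add]; exact pow_le_pow_right₀ hN (by norm_num)
    have h3 : l^4 ≤ 1 := pow_le_one₀ hl0.le hl1
    have h4 : a^1*N^1 ≤ N^4 := le_trans (mul_le_mul_of_nonneg_right h1 (pow_pos hNpos 1).le) h2
    have h6 : (0:ℝ) ≤ a^1*N^1 := by positivity
    linarith [h4, mul_le_mul_of_nonneg_left h3 h6]
  have hn7 : 0 ≤ a^1*N^2*l^1 := by positivity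
  have hn8 : 0 ≤ a^1*N^2*l^2 := by positivity
  have hn9 : 0 ≤ a^2*l^3 := by positivity
  have hb10 : a^2*l^4 ≤ N^4 := by
    have h1 : a^2 ≤ N^2 := pow_le_pow_left₀ ha0.le haN 2
    have h2 : N^2*N^0 ≤ N^4 := by rw [← pow_add]; exact pow_le_pow_right₀ hN (by norm_num)
    have h3 : l^4 ≤ 1 := pow_le_one₀ hl0.le hl1
    have h4 : a^2*N^0 ≤ N^4 := le_trans (mul_le_mul_of_nonneg_right h1 (pow_pos hNpos 0).le) h2
    have h6 : (0:ℝ) ≤ a^2*N^0 := by positivity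
    linarith [h4, mul_le_mul_of_nonneg_left h3 h6]
  have hn11 : 0 ≤ a^2*l^5 := by positivity
  have hb12 : a^2*l^6 ≤ N^4 := by
    have h1 : a^2 ≤ N^2 := pow_le_pow_left₀ ha0.le haN 2
    have h2 : N^2*N^0 ≤ N^4 := by rw [← pow_add]; exact pow_le_pow_right₀ hN (by norm_num)
    have h3 : l^6 ≤ 1 := pow_le_one₀ hl0.le hl1
    have h4 : a^2*N^0 ≤ N^4 := le_trans (mul_le_mul_of_nonneg_right h1 (pow_pos hNpos 0).le) h2
    have h6 : (0:ℝ) ≤ a^2*N^0 := by positivity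
    linarith [h4, mul_le_mul_of_nonneg_left h3 h6]
  have hn13 : 0 ≤ a^2*N^1*l^2 := by positivity
  have hb14 : a^2*N^1*l^3 ≤ N^4 := by
    have h1 : a^2 ≤ N^2 := pow_le_pow_left₀ ha0.le haN 2
    have h2 : N^2*N^1 ≤ N^4 := by rw [← pow_add]; exact pow_le_pow_right₀ hN (by norm_num)
    have h3 : l^3 ≤ 1 := pow_le_one₀ hl0.le hl1
    have h4 : a^2*N^1 ≤ N^4 := le_trans (mul_le_mul_of_nonneg_right h1 (pow_pos hNpos 1).le) h2
    have h6 : (0:ℝ) ≤ a^2*N^1 := by positivity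
    linarith [h4, mul_le_mul_of_nonneg_left h3 h6]
  have hn15 : 0 ≤ a^2*N^1*l^4 := by positivity
  have hb16 : a^2*N^2*l^2 ≤ N^4 := by
    have h1 : a^2 ≤ N^2 := pow_le_pow_left₀ ha0.le haN 2
    have h2 : N^2*N^2 ≤ N^4 := by rw [← pow_add]
    have h3 : l^2 ≤ 1 := pow_le_one₀ hl0.le hl1
    have h4 : a^2*N^2 ≤ N^4 := le_trans (mul_le_mul_of_nonneg_right h1 (pow_pos hNpos 2).le) h2
    have h6 : (0:ℝ) ≤ a^2*N^2 := by positivity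
    linarith [h4, mul_le_mul_of_nonneg_left h3 h6]
  linarith [(pow_pos hNpos 4).le, hb1, hb2, hb3, hn4, hn5, hb6, hn7, hn8, hn9, hb10, hn11, hb12, hn13, hb14, hn15, hb16]

lemma R2bound {N a l : ℝ} (hN : 1 ≤ N) (ha0 : 0 < a) (haN : a ≤ N) (hl0 : 0 < l) (hl1 : l ≤ 1) :
    24*N^2*l^1 - 8*N^3*l^1 + 8*N^2*l^2 - 8*N^3*l^2 - 48*a^1*N^2*l^2 + 16*a^1*N^3*l^2 - 12*N^2*l^3 - 2*N^3*l^3 - 48*a^1*N^1*l^3 + 40*a^1*N^2*l^3 + 8*a^1*N^3*l^3 + 24*a^2*N^2*l^3 - 8*a^2*N^3*l^3 + 4*N^2*l^4 + 76*a^1*N^1*l^4 + 4*a^1*N^2*l^4 + 48*a^2*N^1*l^4 - 48*a^2*N^2*l^4 + 4*N^2*l^5 - 46*a^1*N^1*l^5 - 22*a^1*N^2*l^5 + 24*a^2*l^5 - 124*a^2*N^1*l^5 + 28*a^2*N^2*l^5 - 6*a^1*N^1*l^6 - 84*a^2*l^6 + 132*a^2*N^1*l^6 + 27*a^1*N^1*l^7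 + (255/2)*a^2*l^7 - (117/2)*a^2*N^1*l^7 - 96*a^2*l^8 + 27*a^2*l^9 ≤ 700*N^5 := by
  have hNpos : (0:ℝ) < N := lt_of_lt_of_le one_pos hN
  have hb1 : N^2*l^1 ≤ N^5 := by
    have h1 : a^0 ≤ N^0 := pow_le_pow_left₀ ha0.le haN 0
    have h2 : N^0*N^2 ≤ N^5 := by rw [← pow_add]; exact pow_le_pow_right₀ hN (by norm_num)
    have h3 : l^1 ≤ 1 := pow_le_one₀ hl0.le hl1
    have h4 : a^0*N^2 ≤ N^5 := le_trans (mul_le_mul_of_nonneg_right h1 (pow_pos hNpos 2).le) h2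
    have h6 : (0:ℝ) ≤ a^0*N^2 := by positivity
    linarith [h4, mul_le_mul_of_nonneg_left h3 h6]
  have hb2 : N^2*l^2 ≤ N^5 := by
    have h1 : a^0 ≤ N^0 := pow_le_pow_left₀ ha0.le haN 0
    have h2 : N^0*N^2 ≤ N^5 := by rw [← pow_add]; exact pow_le_pow_right₀ hN (by norm_num)
    have h3 : l^2 ≤ 1 := pow_le_one₀ hl0.le hl1
    have h4 : a^0*N^2 ≤ N^5 := le_trans (mul_le_mul_of_nonneg_right h1 (pow_pos hNpos 2).le) h2
    have h6 : (0:ℝ) ≤ a^0*N^2 := by positivity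
    linarith [h4, mul_le_mul_of_nonneg_left h3 h6]
  have hn3 : 0 ≤ N^2*l^3 := by positivity
  have hb4 : N^2*l^4 ≤ N^5 := by
    have h1 : a^0 ≤ N^0 := pow_le_pow_left₀ ha0.le haN 0
    have h2 : N^0*N^2 ≤ N^5 := by rw [← pow_add]; exact pow_le_pow_right₀ hN (by norm_num)
    have h3 : l^4 ≤ 1 := pow_le_one₀ hl0.le hl1
    have h4 : a^0*N^2 ≤ N^5 := le_trans (mul_le_mul_of_nonneg_right h1 (pow_pos hNpos 2).le) h2
    have h6 : (0:ℝ) ≤ a^0*N^2 := by positivity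
    linarith [h4, mul_le_mul_of_nonneg_left h3 h6]
  have hb5 : N^2*l^5 ≤ N^5 := by
    have h1 : a^0 ≤ N^0 := pow_le_pow_left₀ ha0.le haN 0
    have h2 : N^0*N^2 ≤ N^5 := by rw [← pow_add]; exact pow_le_pow_right₀ hN (by norm_num)
    have h3 : l^5 ≤ 1 := pow_le_one₀ hl0.le hl1
    have h4 : a^0*N^2 ≤ N^5 := le_trans (mul_le_mul_of_nonneg_right h1 (pow_pos hNpos 2).le) h2
    have h6 : (0:ℝ) ≤ a^0*N^2 := by positivity
    linarith [h4, mul_le_mul_of_nonneg_left h3 h6]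
  have hn6 : 0 ≤ N^3*l^1 := by positivity
  have hn7 : 0 ≤ N^3*l^2 := by positivity
  have hn8 : 0 ≤ N^3*l^3 := by positivity
  have hn9 : 0 ≤ a^1*N^1*l^3 := by positivity
  have hb10 : a^1*N^1*l^4 ≤ N^5 := by
    have h1 : a^1 ≤ N^1 := pow_le_pow_left₀ ha0.le haN 1
    have h2 : N^1*N^1 ≤ N^5 := by rw [← pow_add]; exact pow_le_pow_right₀ hN (by norm_num)
    have h3 : l^4 ≤ 1 := pow_le_one₀ hl0.le hl1
    have h4 : a^1*N^1 ≤ N^5 := le_trans (mul_le_mul_of_nonneg_right h1 (pow_pos hNpos 1).le) h2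
    have h6 : (0:ℝ) ≤ a^1*N^1 := by positivity
    linarith [h4, mul_le_mul_of_nonneg_left h3 h6]
  have hn11 : 0 ≤ a^1*N^1*l^5 := by positivity
  have hn12 : 0 ≤ a^1*N^1*l^6 := by positivity
  have hb13 : a^1*N^1*l^7 ≤ N^5 := by
    have h1 : a^1 ≤ N^1 := pow_le_pow_left₀ ha0.le haN 1
    have h2 : N^1*N^1 ≤ N^5 := by rw [← pow_add]; exact pow_le_pow_right₀ hN (by norm_num)
    have h3 : l^7 ≤ 1 := pow_le_one₀ hl0.le hl1
    have h4 : a^1*N^1 ≤ N^5 := le_trans (mul_le_mul_of_nonneg_right h1 (pow_pos hNpos 1).le) h2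
    have h6 : (0:ℝ) ≤ a^1*N^1 := by positivity
    linarith [h4, mul_le_mul_of_nonneg_left h3 h6]
  have hn14 : 0 ≤ a^1*N^2*l^2 := by positivity
  have hb15 : a^1*N^2*l^3 ≤ N^5 := by
    have h1 : a^1 ≤ N^1 := pow_le_pow_left₀ ha0.le haN 1
    have h2 : N^1*N^2 ≤ N^5 := by rw [← pow_add]; exact pow_le_pow_right₀ hN (by norm_num)
    have h3 : l^3 ≤ 1 := pow_le_one₀ hl0.le hl1
    have h4 : a^1*N^2 ≤ N^5 := le_trans (mul_le_mul_of_nonneg_right h1 (pow_pos hNpos 2).le) h2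
    have h6 : (0:ℝ) ≤ a^1*N^2 := by positivity
    linarith [h4, mul_le_mul_of_nonneg_left h3 h6]
  have hb16 : a^1*N^2*l^4 ≤ N^5 := by
    have h1 : a^1 ≤ N^1 := pow_le_pow_left₀ ha0.le haN 1
    have h2 : N^1*N^2 ≤ N^5 := by rw [← pow_add]; exact pow_le_pow_right₀ hN (by norm_num)
    have h3 : l^4 ≤ 1 := pow_le_one₀ hl0.le hl1
    have h4 : a^1*N^2 ≤ N^5 := le_trans (mul_le_mul_of_nonneg_right h1 (pow_pos hNpos 2).le) h2
    have h6 : (0:ℝ) ≤ a^1*N^2 := by positivity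
    linarith [h4, mul_le_mul_of_nonneg_left h3 h6]
  have hn17 : 0 ≤ a^1*N^2*l^5 := by positivity
  have hb18 : a^1*N^3*l^2 ≤ N^5 := by
    have h1 : a^1 ≤ N^1 := pow_le_pow_left₀ ha0.le haN 1
    have h2 : N^1*N^3 ≤ N^5 := by rw [← pow_add]; exact pow_le_pow_right₀ hN (by norm_num)
    have h3 : l^2 ≤ 1 := pow_le_one₀ hl0.le hl1
    have h4 : a^1*N^3 ≤ N^5 := le_trans (mul_le_mul_of_nonneg_right h1 (pow_pos hNpos 3).le) h2
    have h6 : (0:ℝ) ≤ a^1*N^3 := by positivity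
    linarith [h4, mul_le_mul_of_nonneg_left h3 h6]
  have hb19 : a^1*N^3*l^3 ≤ N^5 := by
    have h1 : a^1 ≤ N^1 := pow_le_pow_left₀ ha0.le haN 1
    have h2 : N^1*N^3 ≤ N^5 := by rw [← pow_add]; exact pow_le_pow_right₀ hN (by norm_num)
    have h3 : l^3 ≤ 1 := pow_le_one₀ hl0.le hl1
    have h4 : a^1*N^3 ≤ N^5 := le_trans (mul_le_mul_of_nonneg_right h1 (pow_pos hNpos 3).le) h2
    have h6 : (0:ℝ) ≤ a^1*N^3 := by positivity
    linarith [h4, mul_le_mul_of_nonneg_left h3 h6]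
  have hb20 : a^2*l^5 ≤ N^5 := by
    have h1 : a^2 ≤ N^2 := pow_le_pow_left₀ ha0.le haN 2
    have h2 : N^2*N^0 ≤ N^5 := by rw [← pow_add]; exact pow_le_pow_right₀ hN (by norm_num)
    have h3 : l^5 ≤ 1 := pow_le_one₀ hl0.le hl1
    have h4 : a^2*N^0 ≤ N^5 := le_trans (mul_le_mul_of_nonneg_right h1 (pow_pos hNpos 0).le) h2
    have h6 : (0:ℝ) ≤ a^2*N^0 := by positivity
    linarith [h4, mul_le_mul_of_nonneg_left h3 h6]
  have hn21 : 0 ≤ a^2*l^6 := by positivity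
  have hb22 : a^2*l^7 ≤ N^5 := by
    have h1 : a^2 ≤ N^2 := pow_le_pow_left₀ ha0.le haN 2
    have h2 : N^2*N^0 ≤ N^5 := by rw [← pow_add]; exact pow_le_pow_right₀ hN (by norm_num)
    have h3 : l^7 ≤ 1 := pow_le_one₀ hl0.le hl1
    have h4 : a^2*N^0 ≤ N^5 := le_trans (mul_le_mul_of_nonneg_right h1 (pow_pos hNpos 0).le) h2
    have h6 : (0:ℝ) ≤ a^2*N^0 := by positivity
    linarith [h4, mul_le_mul_of_nonneg_left h3 h6]
  have hn23 : 0 ≤ a^2*l^8 := by positivity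
  have hb24 : a^2*l^9 ≤ N^5 := by
    have h1 : a^2 ≤ N^2 := pow_le_pow_left₀ ha0.le haN 2
    have h2 : N^2*N^0 ≤ N^5 := by rw [← pow_add]; exact pow_le_pow_right₀ hN (by norm_num)
    have h3 : l^9 ≤ 1 := pow_le_one₀ hl0.le hl1
    have h4 : a^2*N^0 ≤ N^5 := le_trans (mul_le_mul_of_nonneg_right h1 (pow_pos hNpos 0).le) h2
    have h6 : (0:ℝ) ≤ a^2*N^0 := by positivity
    linarith [h4, mul_le_mul_of_nonneg_left h3 h6]
  have hb25 : a^2*N^1*l^4 ≤ N^5 := by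
    have h1 : a^2 ≤ N^2 := pow_le_pow_left₀ ha0.le haN 2
    have h2 : N^2*N^1 ≤ N^5 := by rw [← pow_add]; exact pow_le_pow_right₀ hN (by norm_num)
    have h3 : l^4 ≤ 1 := pow_le_one₀ hl0.le hl1
    have h4 : a^2*N^1 ≤ N^5 := le_trans (mul_le_mul_of_nonneg_right h1 (pow_pos hNpos 1).le) h2
    have h6 : (0:ℝ) ≤ a^2*N^1 := by positivity
    linarith [h4, mul_le_mul_of_nonneg_left h3 h6]
  have hn26 : 0 ≤ a^2*N^1*l^5 := by positivity
  have hb27 : a^2*N^1*l^6 ≤ N^5 := by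
    have h1 : a^2 ≤ N^2 := pow_le_pow_left₀ ha0.le haN 2
    have h2 : N^2*N^1 ≤ N^5 := by rw [← pow_add]; exact pow_le_pow_right₀ hN (by norm_num)
    have h3 : l^6 ≤ 1 := pow_le_one₀ hl0.le hl1
    have h4 : a^2*N^1 ≤ N^5 := le_trans (mul_le_mul_of_nonneg_right h1 (pow_pos hNpos 1).le) h2
    have h6 : (0:ℝ) ≤ a^2*N^1 := by positivity
    linarith [h4, mul_le_mul_of_nonneg_left h3 h6]
  have hn28 : 0 ≤ a^2*N^1*l^7 := by positivity
  have hb29 : a^2*N^2*l^3 ≤ N^5 := by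
    have h1 : a^2 ≤ N^2 := pow_le_pow_left₀ ha0.le haN 2
    have h2 : N^2*N^2 ≤ N^5 := by rw [← pow_add]; exact pow_le_pow_right₀ hN (by norm_num)
    have h3 : l^3 ≤ 1 := pow_le_one₀ hl0.le hl1
    have h4 : a^2*N^2 ≤ N^5 := le_trans (mul_le_mul_of_nonneg_right h1 (pow_pos hNpos 2).le) h2
    have h6 : (0:ℝ) ≤ a^2*N^2 := by positivity
    linarith [h4, mul_le_mul_of_nonneg_left h3 h6]
  have hn30 : 0 ≤ a^2*N^2*l^4 := by positivity
  have hb31 : a^2*N^2*l^5 ≤ N^5 := by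
    have h1 : a^2 ≤ N^2 := pow_le_pow_left₀ ha0.le haN 2
    have h2 : N^2*N^2 ≤ N^5 := by rw [← pow_add]; exact pow_le_pow_right₀ hN (by norm_num)
    have h3 : l^5 ≤ 1 := pow_le_one₀ hl0.le hl1
    have h4 : a^2*N^2 ≤ N^5 := le_trans (mul_le_mul_of_nonneg_right h1 (pow_pos hNpos 2).le) h2
    have h6 : (0:ℝ) ≤ a^2*N^2 := by positivity
    linarith [h4, mul_le_mul_of_nonneg_left h3 h6]
  have hn32 : 0 ≤ a^2*N^3*l^3 := by positivity
  linarith [(pow_pos hNpos 5).le, hb1, hb2, hn3, hb4, hb5, hn6, hn7, hn8, hn9, hb10, hn11, hn12, hb13, hn14, hb15, hb16, hn17, hb18, hb19, hb20, hn21, hb22, hn23, hb24, hb25, hn26, hb27, hn28, hb29, hn30, hb31, hn32]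

lemma G_lower {N a l : ℝ} (hN : 1 ≤ N) (ha1 : N/8 ≤ a) (ha2 : a ≤ 3*N/8) (hl0 : 0 < l)
    (hl : 4*N*l ≤ 1) : N ≤ 2*N + (N - 2*a*N)*l - 2*a*l^2 + 3/2*a*l^3 := by
  have hNpos : (0:ℝ) < N := lt_of_lt_of_le one_pos hN
  have ha0 : 0 < a := lt_of_lt_of_le (by positivity) ha1
  have hNl : N*l ≤ 1/4 := by nlinarith
  have hle : l ≤ 1/4 := by nlinarith
  have h1 : 2*a*N*l ≤ (3/16)*N := by nlinarith [mul_le_mul ha2 hNl (by positivity) (by positivity : (0:ℝ) ≤ 3*N/8)]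
  have hal : a*l ≤ 3/32 := by nlinarith [mul_le_mul ha2 hle hl0.le (by positivity : (0:ℝ) ≤ 3*N/8)]
  have h2 : 2*a*l^2 ≤ 3/64 := by nlinarith [mul_le_mul hal hle (by positivity : (0:ℝ) ≤ l) (by norm_num : (0:ℝ) ≤ 3/32)]
  nlinarith [mul_pos ha0 (pow_pos hl0 3), mul_pos hNpos hl0]

lemma main_est {N a b ε t r P R : ℝ} (hN : 1 ≤ N) (ha0 : 0 < a) (haN : a ≤ N)
    (hb1 : 1 ≤ b) (hb2 : b ≤ 3/2) (hε0 : 0 < ε) (hε1 : ε ≤ 1/2) (ht0 : 0 < t)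
    (h0 : 0 < r) (hP : P ≤ 300*N^4) (hR : R ≤ 700*N^5)
    (hA2t : (3000*N^6)^2 * t ≤ ε * r^2) :
    b*t*P*r^2 + b^2*t^2*a*R ≤ ε*N*r^4 := by
  have hNpos : (0:ℝ) < N := lt_of_lt_of_le one_pos hN
  have hb0 : (0:ℝ) < b := lt_of_lt_of_le one_pos hb1
  have hN9 : (1:ℝ) ≤ N^9 := one_le_pow₀ hN
  have hN19 : (1:ℝ) ≤ N^19 := one_le_pow₀ hN
  have part1 : b*t*P*r^2 ≤ ε*N*r^4/2 := by
    have e1 : b*t*P*r^2 ≤ b*t*(300*N^4)*r^2 := by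
      linarith only [mul_le_mul_of_nonneg_left hP (show (0:ℝ) ≤ b*t*r^2 by positivity)]
    have e2 : b*t*(300*N^4)*r^2 ≤ 450*N^4*(t*r^2) := by
      linarith only [mul_le_mul_of_nonneg_right hb2 (show (0:ℝ) ≤ t*(300*N^4)*r^2 by positivity)]
    have f1 : 9000000*N^12*(t*r^2) ≤ ε*r^4 := by
      linarith only [mul_le_mul_of_nonneg_right hA2t (sq_nonneg r)]
    have f3 : 450*N^4 ≤ (N/2)*(9000000*N^12) := by
      linarith only [mul_le_mul_of_nonneg_left hN9 (show (0:ℝ) ≤ N^4 by positivity),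
        pow_nonneg hNpos.le 13]
    have f4 : 450*N^4*(t*r^2) ≤ (N/2)*(9000000*N^12)*(t*r^2) :=
      mul_le_mul_of_nonneg_right f3 (by positivity)
    have f5 : (N/2)*(9000000*N^12)*(t*r^2) ≤ (N/2)*(ε*r^4) := by
      linarith only [mul_le_mul_of_nonneg_left f1 (show (0:ℝ) ≤ N/2 by positivity)]
    linarith only [e1, e2, f4, f5]
  have part2 : b^2*t^2*a*R ≤ ε*N*r^4/2 := by
    have g1 : b^2*t^2*a*R ≤ b^2*t^2*a*(700*N^5) := by
      linarith only [mul_le_mul_of_nonneg_left hR (show (0:ℝ) ≤ b^2*t^2*a by positivity)]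
    have hbb : b^2 ≤ 9/4 := by
      calc b^2 ≤ (3/2)^2 := pow_le_pow_left₀ hb0.le hb2 2
        _ = 9/4 := by norm_num
    have k1 : b^2*t^2*a*(700*N^5) ≤ b^2*t^2*N*(700*N^5) := by
      linarith only [mul_le_mul_of_nonneg_left haN (show (0:ℝ) ≤ b^2*t^2*(700*N^5) by positivity)]
    have k2 : b^2*t^2*N*(700*N^5) ≤ 1575*N^6*t^2 := by
      linarith only [mul_le_mul_of_nonneg_right hbb (show (0:ℝ) ≤ t^2*N*(700*N^5) by positivity)]
    have h6 : (9000000*N^12)^2*t^2 ≤ ε^2*r^4 := by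
      linarith only [mul_self_le_mul_self (by positivity : (0:ℝ) ≤ (3000*N^6)^2*t) hA2t]
    have h7 : ε^2*r^4 ≤ (ε/2)*r^4 := by
      have hee : ε*ε ≤ (1/2)*ε := mul_le_mul_of_nonneg_right hε1 hε0.le
      linarith only [mul_le_mul_of_nonneg_right hee (pow_nonneg h0.le 4)]
    have h8 : 1575*N^6 ≤ (N/2)*(9000000*N^12)^2 := by
      linarith only [mul_le_mul_of_nonneg_left hN19 (show (0:ℝ) ≤ N^6 by positivity),
        pow_nonneg hNpos.le 25]
    have h9 : 1575*N^6*t^2 ≤ (N/2)*(9000000*N^12)^2*t^2 :=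
      mul_le_mul_of_nonneg_right h8 (by positivity)
    have h10 : (N/2)*((9000000*N^12)^2*t^2) ≤ (N/2)*((ε/2)*r^4) :=
      mul_le_mul_of_nonneg_left (le_trans h6 h7) (by positivity)
    linarith only [g1, k1, k2, h9, h10,
      mul_pos (mul_pos hε0 hNpos) (pow_pos h0 4)]
  linarith only [part1, part2]

set_option maxHeartbeats 2000000 in
lemma final_ineq {N a b ε t r : ℝ} (hN : 1 ≤ N) (ha1 : N/8 ≤ a) (ha2 : a ≤ 3*N/8)
    (hb : b = 1 + ε) (hε0 : 0 < ε) (hε1 : ε ≤ 1/2) (ht0 : 0 < t)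
    (h0 : 0 < r) (h1 : r < 1) (hl4N : 4*N*(Lam r) ≤ 1)
    (hA2t : (3000*N^6)^2 * t ≤ ε * r^2) :
    gamE N a r + b*t * LEe N a r + b^2*t^2 * QEe N a r ≤ b * gamE N a r := by
  have hNpos : (0:ℝ) < N := lt_of_lt_of_le one_pos hN
  have ha0 : 0 < a := lt_of_lt_of_le (by positivity) ha1
  have haN : a ≤ N := by linarith
  have hb1 : (1:ℝ) ≤ b := by rw [hb]; linarith
  have hb2 : b ≤ 3/2 := by rw [hb]; linarith
  have hl0 : 0 < Lam r := lam_pos h0 h1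
  have hl1 : Lam r ≤ 1 := by nlinarith [mul_le_mul_of_nonneg_right hN hl0.le]
  have hP := P2bound (a := a) (l := Lam r) hN ha0 haN hl0 hl1
  have hR := R2bound (a := a) (l := Lam r) hN ha0 haN hl0 hl1
  have claim1 := main_est (a := a) hN ha0 haN hb1 hb2 hε0 hε1 ht0 h0 hP hR hA2t
  have step : b*t * LEe N a r + b^2*t^2 * QEe N a r
      = a*(Lam r)/r^6 * (b*t*(2*N^2*(Lam r)^1 + 16*a^1*N^1*(Lam r)^1 - 8*a^1*N^2*(Lam r)^1 + 2*N^2*(Lam r)^2 - 4*a^1*N^1*(Lam r)^2 - 8*a^1*N^2*(Lam r)^2 - 16*a^2*N^1*(Lam r)^2 + 8*a^2*N^2*(Lam r)^2 - 12*a^1*N^1*(Lam r)^3 - 16*a^2*(Lam r)^3 + 32*a^2*N^1*(Lam r)^3 + 12*a^1*N^1*(Lam r)^4 + 48*a^2*(Lam r)^4 - 18*a^2*N^1*(Lam r)^4 - 58*a^2*(Lam r)^5 + 27*a^2*(Lam r)^6)*r^2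
        + b^2*t^2*a*(24*N^2*(Lam r)^1 - 8*N^3*(Lam r)^1 + 8*N^2*(Lam r)^2 - 8*N^3*(Lam r)^2 - 48*a^1*N^2*(Lam r)^2 + 16*a^1*N^3*(Lam r)^2 - 12*N^2*(Lam r)^3 - 2*N^3*(Lam r)^3 - 48*a^1*N^1*(Lam r)^3 + 40*a^1*N^2*(Lam r)^3 + 8*a^1*N^3*(Lam r)^3 + 24*a^2*N^2*(Lam r)^3 - 8*a^2*N^3*(Lam r)^3 + 4*N^2*(Lam r)^4 + 76*a^1*N^1*(Lam r)^4 + 4*a^1*N^2*(Lam r)^4 + 48*a^2*N^1*(Lam r)^4 - 48*a^2*N^2*(Lam r)^4 + 4*N^2*(Lam r)^5 - 46*a^1*N^1*(Lam r)^5 - 22*a^1*N^2*(Lam r)^5 + 24*a^2*(Lam r)^5 - 124*a^2*N^1*(Lam r)^5 + 28*a^2*N^2*(Lam r)^5 - 6*a^1*N^1*(Lam r)^6 - 84*a^2*(Lam r)^6 + 132*a^2*N^1*(Lam r)^6 + 27*a^1*N^1*(Lam r)^7 + (255/2)*a^2*(Lam r)^7 - (117/2)*a^2*N^1*(Lam r)^7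 - 96*a^2*(Lam r)^8 + 27*a^2*(Lam r)^9)) := by
    simp only [LEe, QEe]
    field_simp
    ring
  have step2 := mul_le_mul_of_nonneg_left claim1
    (show (0:ℝ) ≤ a*(Lam r)/r^6 by positivity)
  have step3 : a*(Lam r)/r^6 * (ε*N*r^4) = ε*(a*(Lam r)*N/r^2) := by
    field_simp
  have hgam : gamE N a r
      = a*(Lam r)*(2*N + (N - 2*a*N)*(Lam r) - 2*a*(Lam r)^2 + 3/2*a*(Lam r)^3)/r^2 := by
    simp only [gamE]
    field_simp
    ring
  have step4 : ε*(a*(Lam r)*N/r^2) ≤ ε * gamE N a r := by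
    rw [hgam]
    apply mul_le_mul_of_nonneg_left _ hε0.le
    rw [div_le_div_iff₀ (by positivity) (by positivity)]
    have hG := G_lower hN ha1 ha2 hl0 hl4N
    nlinarith [mul_le_mul_of_nonneg_left hG (show (0:ℝ) ≤ a*(Lam r) by positivity), sq_nonneg r]
  have final : b*t * LEe N a r + b^2*t^2 * QEe N a r ≤ ε * gamE N a r := by
    rw [step]
    calc a*(Lam r)/r^6 * _ ≤ a*(Lam r)/r^6 * (ε*N*r^4) := step2
      _ = ε*(a*(Lam r)*N/r^2) := step3
      _ ≤ ε * gamE N a r := step4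
  have hbg : b * gamE N a r = gamE N a r + ε * gamE N a r := by rw [hb]; ring
  linarith only [final, hbg]

set_option maxHeartbeats 1000000 in
theorem stmt3 (n : ℕ) (hn : 2 ≤ n) :
    ∃ A > (0:ℝ), ∃ rstar ∈ Ioo (0:ℝ) 1,
      ∀ δ : ℝ, |δ| ≤ 1/2 →
        ∃ ε₀ > (0:ℝ), ∀ ε : ℝ, 0 < ε → ε < ε₀ →
          ∃ tstar > (0:ℝ),
            ∀ r t : ℝ, A / Real.sqrt ε * Real.sqrt t ≤ r → r ≤ rstar →
              0 < t → t < tstar →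
              Fop n (fun ρ => vOuter n ((1 + δ) * ((n:ℝ) - 1) / 4) (1 + ε) ρ t) r ≤
                deriv (fun s => vOuter n ((1 + δ) * ((n:ℝ) - 1) / 4) (1 + ε) r s) t := by
  have hN : (1:ℝ) ≤ (n:ℝ) - 1 := by
    have : (2:ℝ) ≤ (n:ℝ) := by exact_mod_cast hn
    linarith
  set N : ℝ := (n:ℝ) - 1 with hNdef
  have hNpos : (0:ℝ) < N := lt_of_lt_of_le one_pos hN
  refine ⟨3000*N^6, by positivity, Real.exp (-(4*N)), ⟨Real.exp_pos _, ?_⟩, ?_⟩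
  · rw [show (1:ℝ) = Real.exp 0 from (Real.exp_zero).symm]
    exact Real.exp_lt_exp.mpr (by nlinarith)
  intro δ hδ
  refine ⟨1/2, by norm_num, ?_⟩
  intro ε hε0 hε1
  refine ⟨1, one_pos, ?_⟩
  intro r t hrA hrstar ht0 ht1
  have hδ' := abs_le.mp hδ
  set a : ℝ := (1 + δ) * N / 4 with hadef
  set b : ℝ := 1 + ε with hbdef
  have ha1 : N/8 ≤ a := by rw [hadef]; nlinarith [hδ'.1, hδ'.2, hNpos]
  have ha2 : a ≤ 3*N/8 := by rw [hadef]; nlinarith [hδ'.1, hδ'.2, hNpos]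
  have hsε : 0 < Real.sqrt ε := Real.sqrt_pos.mpr hε0
  have hst : 0 < Real.sqrt t := Real.sqrt_pos.mpr ht0
  have h0 : 0 < r :=
    lt_of_lt_of_le (mul_pos (div_pos (by positivity) hsε) hst) hrA
  have h1 : r < 1 := lt_of_le_of_lt hrstar (by
    rw [show (1:ℝ) = Real.exp 0 from (Real.exp_zero).symm]
    exact Real.exp_lt_exp.mpr (by nlinarith))
  have hlogr : Real.log r < 0 := Real.log_neg h0 h1
  have hlog4N : 4*N ≤ -Real.log r := by
    have h := Real.log_le_log h0 hrstar
    rw [Real.log_exp] at h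
    linarith
  have hl4N : 4*N*(Lam r) ≤ 1 := by
    unfold Lam
    rw [mul_one_div, div_le_one (by linarith : (0:ℝ) < -Real.log r)]
    exact hlog4N
  have hA2t : (3000*N^6)^2 * t ≤ ε * r^2 := by
    have hu : Real.sqrt ε * Real.sqrt ε = ε := Real.mul_self_sqrt hε0.le
    have hv : Real.sqrt t * Real.sqrt t = t := Real.mul_self_sqrt ht0.le
    have h2 : (3000*N^6)*Real.sqrt t ≤ r*Real.sqrt ε := by
      rw [div_mul_eq_mul_div, div_le_iff₀ hsε] at hrA
      linarith
    have hs := mul_self_le_mul_self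
      (by positivity : (0:ℝ) ≤ (3000*N^6)*Real.sqrt t) h2
    have e1 : ((3000*N^6)*Real.sqrt t)*((3000*N^6)*Real.sqrt t) = (3000*N^6)^2*t := by
      rw [mul_mul_mul_comm, hv, ← pow_two]
    have e2 : (r*Real.sqrt ε)*(r*Real.sqrt ε) = ε*r^2 := by
      rw [mul_mul_mul_comm, hu, ← pow_two]; ring
    linarith
  rw [fop_vO n a b t h0 h1]
  have hdrhs : deriv (fun s => vOuter n a b r s) t
      = b * Fop n (fun ρ => a * Lam ρ) r := by
    have h := (((hasDerivAt_id' t).const_mul b).mul_const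
        (Fop n (fun ρ => a * Lam ρ) r)).const_add (a * Lam r)
    have h2 : HasDerivAt (fun s : ℝ => a * Lam r + b * s * Fop n (fun ρ => a * Lam ρ) r)
        (b * 1 * Fop n (fun ρ => a * Lam ρ) r) t := h
    simp only [vOuter]
    rw [h2.deriv]; ring
  rw [hdrhs, fop_glam n a h0 h1]
  exact final_ineq hN ha1 ha2 hbdef hε0 (le_of_lt hε1) ht0 h0 h1 hl4N hA2t
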